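/- arXiv:2211.05433 — 3 statements merged into one kernel-verified Lean document; each statement's English description precedes it below -/
import Mathlib

section
/- Let ε > 0, d ≥ 1, k ≥ 1, and for each j = 1,…,k let X^j ∈ ℝ^{d×m_j} with m_j ≥ 1. Let X = [X^1,…,X^k] ∈ ℝ^{d×m} be the horizontal concatenation with m = Σ_j m_j, and let X̄ and X̄^j be the matrices X and X^j centered by their respective column means. Then log det(I_d + (d/(mε²))·X̄X̄ᵀ) ≥ Σ_{j=1}^k (m_j/m)·log det(I_d + (d/(m_jε²))·X̄^j(X̄^j)ᵀ). -/
set_option maxHeartbeats 1000000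

open Matrix BigOperators

/-- Column mean of a matrix `Y : ℝ^{d×n}` (columns indexed by `ι`). -/
noncomputable def colMean {d : ℕ} {ι : Type} [Fintype ι] (Y : Matrix (Fin d) ι ℝ) :
    Fin d → ℝ :=
  fun i => (∑ l, Y i l) / (Fintype.card ι)

/-- Centered matrix `Ȳ = Y - μ(Y)·1_{1×n}`. -/
noncomputable def centered {d : ℕ} {ι : Type} [Fintype ι] (Y : Matrix (Fin d) ι ℝ) :
    Matrix (Fin d) ι ℝ :=
  Matrix.of fun i l => Y i l - colMean Y i

/-- Horizontal concatenation `[X^1, …, X^k]` of matrices, columns indexed by a sigma type. -/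
def hconcat {d k : ℕ} {m : Fin k → ℕ} (Xc : (j : Fin k) → Matrix (Fin d) (Fin (m j)) ℝ) :
    Matrix (Fin d) ((j : Fin k) × Fin (m j)) ℝ :=
  Matrix.of fun i p => Xc p.1 i p.2

lemma group_sum {n : ℕ} (hn : n ≠ 0) (a b : Fin n → ℝ) (A B : ℝ) :
    ∑ l, (a l - A) * (b l - B)
      = (∑ l, (a l - (∑ l', a l')/n) * (b l - (∑ l', b l')/n))
        + n * ((∑ l', a l')/n - A) * ((∑ l', b l')/n - B) := by
  have expand : ∀ (A B : ℝ), ∑ l, (a l - A) * (b l - B)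
      = (∑ l, a l * b l) - A * (∑ l, b l) - B * (∑ l, a l) + n * (A * B) := by
    intro A B
    have h : ∀ l, (a l - A) * (b l - B) = a l * b l - A * b l - B * a l + A*B := by
      intro l; ring
    simp_rw [h, Finset.sum_add_distrib, Finset.sum_sub_distrib, ← Finset.mul_sum,
      Finset.sum_const, Finset.card_univ, Fintype.card_fin, nsmul_eq_mul]
    ring
  rw [expand, expand]
  have hn' : (n:ℝ) ≠ 0 := Nat.cast_ne_zero.mpr hn
  field_simp
  ring

lemma decomp {d k : ℕ} {m : Fin k → ℕ} (hm : ∀ j, 1 ≤ m j)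
    (Xc : (j : Fin k) → Matrix (Fin d) (Fin (m j)) ℝ) :
    ∃ W : Matrix (Fin d) (Fin k) ℝ,
      centered (hconcat Xc) * (centered (hconcat Xc))ᵀ
        = (∑ j, centered (Xc j) * (centered (Xc j))ᵀ) + W * Wᵀ := by
  classical
  refine ⟨Matrix.of fun i j =>
      Real.sqrt (m j) * (colMean (Xc j) i - colMean (hconcat Xc) i), ?_⟩
  ext i i'
  simp only [Matrix.add_apply, Matrix.mul_apply, Matrix.transpose_apply, Matrix.sum_apply,
    Matrix.of_apply]
  rw [← Finset.univ_sigma_univ, Finset.sum_sigma, ← Finset.sum_add_distrib]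
  refine Finset.sum_congr rfl fun j _ => ?_
  have hn : m j ≠ 0 := Nat.one_le_iff_ne_zero.mp (hm j)
  have hcent : ∀ (i0 : Fin d) (l : Fin (m j)),
      centered (hconcat Xc) i0 ⟨j, l⟩ = Xc j i0 l - colMean (hconcat Xc) i0 := fun _ _ => rfl
  have hcent2 : ∀ (i0 : Fin d) (l : Fin (m j)),
      centered (Xc j) i0 l = Xc j i0 l - (∑ l', Xc j i0 l') / (m j : ℝ) := by
    intro i0 l
    simp [centered, colMean, Fintype.card_fin]
  have hmean : ∀ i0 : Fin d, colMean (Xc j) i0 = (∑ l', Xc j i0 l') / (m j : ℝ) := by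
    intro i0
    simp [colMean, Fintype.card_fin]
  simp only [hcent, hcent2]
  rw [group_sum hn (fun l => Xc j i l) (fun l => Xc j i' l)
      (colMean (hconcat Xc) i) (colMean (hconcat Xc) i')]
  congr 1
  rw [hmean, hmean, mul_mul_mul_comm, Real.mul_self_sqrt (Nat.cast_nonneg _)]
  ring


lemma psd_smul {n : Type*} [Fintype n] {M : Matrix n n ℝ} (hM : M.PosSemidef) {c : ℝ}
    (hc : 0 ≤ c) : (c • M).PosSemidef := by
  exact hM.smul hc

lemma pd_smul {n : Type*} [Fintype n] {M : Matrix n n ℝ} (hM : M.PosDef) {c : ℝ}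
    (hc : 0 < c) : (c • M).PosDef := by
  exact hM.smul hc

lemma det_aI_add_bC {n : Type*} [Fintype n] [DecidableEq n] {C : Matrix n n ℝ}
    (hC : C.IsHermitian) (a b : ℝ) :
    (a • (1 : Matrix n n ℝ) + b • C).det = ∏ i, (a + b * hC.eigenvalues i) := by
  have hU1 : (hC.eigenvectorUnitary : Matrix n n ℝ) * star (hC.eigenvectorUnitary : Matrix n n ℝ) = 1 := by
    simpa using (Matrix.mem_unitaryGroup_iff).mp hC.eigenvectorUnitary.2
  have hU2 : star (hC.eigenvectorUnitary : Matrix n n ℝ) * (hC.eigenvectorUnitary : Matrix n n ℝ) = 1 := by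
    simpa using (Matrix.mem_unitaryGroup_iff').mp hC.eigenvectorUnitary.2
  have hspec := hC.spectral_theorem
  have hdiag : Matrix.diagonal (RCLike.ofReal ∘ hC.eigenvalues) = Matrix.diagonal hC.eigenvalues := by
    congr 1
  have hd : Matrix.diagonal (fun i => a + b * hC.eigenvalues i)
      = a • (1 : Matrix n n ℝ) + b • Matrix.diagonal hC.eigenvalues := by
    rw [← Matrix.diagonal_one, ← Matrix.diagonal_smul, ← Matrix.diagonal_smul,
      Matrix.diagonal_add]
    congr 1
    funext i
    simp [smul_eq_mul]
  have key : a • (1 : Matrix n n ℝ) + b • C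
      = (hC.eigenvectorUnitary : Matrix n n ℝ) *
        Matrix.diagonal (fun i => a + b * hC.eigenvalues i) *
        star (hC.eigenvectorUnitary : Matrix n n ℝ) := by
    rw [hd, Matrix.mul_add, Matrix.add_mul, Matrix.mul_smul, Matrix.smul_mul,
      Matrix.mul_smul, Matrix.smul_mul, Matrix.mul_one, hU1]
    conv_lhs => rw [hspec, Unitary.conjStarAlgAut_apply, hdiag]
  rw [key, Matrix.det_mul, Matrix.det_mul, mul_comm, ← mul_assoc, ← Matrix.det_mul, hU2]
  simp [Matrix.det_diagonal]

-- common conjugation setup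
open scoped MatrixOrder in
lemma conj_setup {n : Type*} [Fintype n] [DecidableEq n] {A : Matrix n n ℝ}
    (hA : A.PosDef) (B : Matrix n n ℝ) :
    ∃ S C : Matrix n n ℝ, S = CFC.sqrt A ∧ C = S⁻¹ * B * S⁻¹ ∧
      S⁻¹.IsHermitian ∧ IsUnit S.det ∧ S.det * S.det = A.det ∧
      (∀ a b : ℝ, a • A + b • B = S * (a • (1:Matrix n n ℝ) + b • C) * S) ∧
      C.det * A.det = B.det := by
  set S := CFC.sqrt A with hSdef
  have hSS : S * S = A := CFC.sqrt_mul_sqrt_self A hA.posSemidef.nonneg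
  have hdetA : 0 < A.det := hA.det_pos
  have hSdet : S.det * S.det = A.det := by rw [← Matrix.det_mul, hSS]
  have hSunit : IsUnit S.det := by
    rw [isUnit_iff_ne_zero]
    intro h; rw [h, mul_zero] at hSdet; exact absurd hSdet.symm (ne_of_gt hdetA)
  have hinv1 : S * S⁻¹ = 1 := Matrix.mul_nonsing_inv _ hSunit
  have hinv2 : S⁻¹ * S = 1 := Matrix.nonsing_inv_mul _ hSunit
  have hSH : S⁻¹.IsHermitian := ((CFC.sqrt_nonneg A).posSemidef.1).inv
  refine ⟨S, S⁻¹ * B * S⁻¹, rfl, rfl, hSH, hSunit, hSdet, fun a b => ?_, ?_⟩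
  · rw [Matrix.mul_add, Matrix.add_mul, Matrix.mul_smul, Matrix.smul_mul, Matrix.mul_one,
      hSS, Matrix.mul_smul, Matrix.smul_mul]
    congr 2
    symm
    calc S * (S⁻¹ * B * S⁻¹) * S = (S * S⁻¹) * B * (S⁻¹ * S) := by
          simp only [Matrix.mul_assoc]
      _ = B := by rw [hinv1, hinv2, Matrix.one_mul, Matrix.mul_one]
  · rw [Matrix.det_mul, Matrix.det_mul, Matrix.det_nonsing_inv, Ring.inverse_eq_inv', ← hSdet]
    have hs : S.det ≠ 0 := isUnit_iff_ne_zero.mp hSunit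
    field_simp

lemma det_one_add_le {n : Type*} [Fintype n] [DecidableEq n] {A B : Matrix n n ℝ}
    (hA : A.PosSemidef) (hB : B.PosSemidef) :
    ((1 : Matrix n n ℝ) + A).det ≤ ((1 : Matrix n n ℝ) + A + B).det := by
  have hM : ((1 : Matrix n n ℝ) + A).PosDef := Matrix.PosDef.add_posSemidef Matrix.PosDef.one hA
  obtain ⟨S, C, hSdef, hCdef, hSH, hSunit, hSdet, hconj, hCdet⟩ := conj_setup hM B
  have hCpsd : C.PosSemidef := by
    have h : S⁻¹ * B * S⁻¹ = S⁻¹ * B * (S⁻¹)ᴴ := by rw [hSH.eq]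
    rw [hCdef, h]
    exact hB.mul_mul_conjTranspose_same S⁻¹
  have key : (1 : Matrix n n ℝ) + A + B
      = S * ((1:ℝ) • (1 : Matrix n n ℝ) + (1:ℝ) • C) * S := by
    rw [← hconj 1 1, one_smul, one_smul]
  have hprod : ((1:ℝ) • (1 : Matrix n n ℝ) + (1:ℝ) • C).det = ∏ i, (1 + 1 * hCpsd.1.eigenvalues i) :=
    det_aI_add_bC hCpsd.1 1 1
  have hge1 : (1:ℝ) ≤ ((1:ℝ) • (1 : Matrix n n ℝ) + (1:ℝ) • C).det := by
    rw [hprod]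
    calc (1:ℝ) = ∏ _i : n, (1:ℝ) := by simp
      _ ≤ ∏ i, (1 + 1 * hCpsd.1.eigenvalues i) := by
          refine Finset.prod_le_prod (fun i _ => by norm_num) fun i _ => ?_
          have := hCpsd.eigenvalues_nonneg i
          linarith
  calc ((1 : Matrix n n ℝ) + A).det = ((1 : Matrix n n ℝ) + A).det * 1 := (mul_one _).symm
    _ ≤ ((1 : Matrix n n ℝ) + A).det * ((1:ℝ) • (1 : Matrix n n ℝ) + (1:ℝ) • C).det :=
        mul_le_mul_of_nonneg_left hge1 hM.det_pos.le
    _ = ((1 : Matrix n n ℝ) + A + B).det := by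
        rw [key, Matrix.det_mul, Matrix.det_mul]
        ring_nf
        nlinarith [hSdet]

lemma logdet_concave_pair {n : Type*} [Fintype n] [DecidableEq n] {A B : Matrix n n ℝ}
    (hA : A.PosDef) (hB : B.PosDef) {a b : ℝ} (ha : 0 < a) (hb : 0 < b) (hab : a + b = 1) :
    a * Real.log A.det + b * Real.log B.det ≤ Real.log (a • A + b • B).det := by
  obtain ⟨S, C, hSdef, hCdef, hSH, hSunit, hSdet, hconj, hCdet⟩ := conj_setup hA B
  have hCpsd : C.PosSemidef := by
    have h : S⁻¹ * B * S⁻¹ = S⁻¹ * B * (S⁻¹)ᴴ := by rw [hSH.eq]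
    rw [hCdef, h]
    exact hB.posSemidef.mul_mul_conjTranspose_same S⁻¹
  have hdetA : 0 < A.det := hA.det_pos
  have hdetB : 0 < B.det := hB.det_pos
  have hdetC : 0 < C.det := by
    by_contra h
    push_neg at h
    nlinarith [hCdet]
  have μpos : ∀ i, 0 < hCpsd.1.eigenvalues i := by
    intro i
    rcases lt_or_eq_of_le (hCpsd.eigenvalues_nonneg i) with h | h
    · exact h
    · exfalso
      have hd : C.det = ∏ i, hCpsd.1.eigenvalues i := by
        have h0 := det_aI_add_bC hCpsd.1 0 1
        simpa using h0
      rw [hd] at hdetC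
      have : ∏ i', hCpsd.1.eigenvalues i' = 0 :=
        Finset.prod_eq_zero (Finset.mem_univ i) h.symm
      rw [this] at hdetC
      exact lt_irrefl 0 hdetC
  have hprod : (a • (1 : Matrix n n ℝ) + b • C).det = ∏ i, (a + b * hCpsd.1.eigenvalues i) :=
    det_aI_add_bC hCpsd.1 a b
  -- scalar concavity of log
  have hscalar : ∀ i, b * Real.log (hCpsd.1.eigenvalues i) ≤ Real.log (a + b * hCpsd.1.eigenvalues i) := by
    intro i
    have h1 : (1:ℝ) ∈ Set.Ioi (0:ℝ) := by norm_num
    have h2 : hCpsd.1.eigenvalues i ∈ Set.Ioi (0:ℝ) := μpos i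
    have := strictConcaveOn_log_Ioi.concaveOn.2 h1 h2 ha.le hb.le hab
    simpa using this
  have hposfac : ∀ i, 0 < a + b * hCpsd.1.eigenvalues i := fun i => by
    have := μpos i; nlinarith
  have hlogprod : Real.log ((a • (1 : Matrix n n ℝ) + b • C).det)
      = ∑ i, Real.log (a + b * hCpsd.1.eigenvalues i) := by
    rw [hprod]
    exact Real.log_prod fun i _ => (hposfac i).ne'
  have hlogC : Real.log C.det = ∑ i, Real.log (hCpsd.1.eigenvalues i) := by
    have hd : C.det = ∏ i, hCpsd.1.eigenvalues i := by
      have h0 := det_aI_add_bC hCpsd.1 0 1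
      simpa using h0
    rw [hd]
    exact Real.log_prod fun i _ => (μpos i).ne'
  have hsum : b * Real.log C.det ≤ Real.log ((a • (1 : Matrix n n ℝ) + b • C).det) := by
    rw [hlogC, hlogprod, Finset.mul_sum]
    exact Finset.sum_le_sum fun i _ => hscalar i
  have hdetfac : (a • A + b • B).det = A.det * (a • (1 : Matrix n n ℝ) + b • C).det := by
    rw [hconj a b, Matrix.det_mul, Matrix.det_mul, ← hSdet]
    ring
  have hmidpos : 0 < (a • (1 : Matrix n n ℝ) + b • C).det := by
    rw [hprod]
    exact Finset.prod_pos fun i _ => hposfac i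
  rw [hdetfac, Real.log_mul hdetA.ne' hmidpos.ne']
  have hlogCval : Real.log C.det = Real.log B.det - Real.log A.det := by
    have : C.det = B.det / A.det := by field_simp [hdetA.ne']; nlinarith [hCdet]
    rw [this, Real.log_div hdetB.ne' hdetA.ne']
  have h2 : b * Real.log C.det = b * Real.log B.det - b * Real.log A.det := by
    rw [hlogCval]; ring
  have h4 : a * Real.log A.det = Real.log A.det - b * Real.log A.det := by
    have h3 : a = 1 - b := by linarith
    rw [h3]; ring
  linarith [hsum, h2, h4]


lemma psd_sum {n ι : Type*} [Fintype n] (s : Finset ι) (f : ι → Matrix n n ℝ)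
    (h : ∀ i ∈ s, (f i).PosSemidef) : (∑ i ∈ s, f i).PosSemidef := by
  classical
  induction s using Finset.induction with
  | empty => simpa using (Matrix.PosSemidef.zero (n := n) (R := ℝ))
  | insert x s hx ih =>
    rw [Finset.sum_insert hx]
    exact (h _ (Finset.mem_insert_self _ _)).add
      (ih fun i hi => h i (Finset.mem_insert_of_mem hi))

lemma logdet_concaveOn {n : Type*} [Fintype n] [DecidableEq n] :
    ConcaveOn ℝ {M : Matrix n n ℝ | M.PosDef} (fun M => Real.log M.det) := by
  constructor
  · intro x hx y hy a b ha hb hab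
    rcases eq_or_lt_of_le ha with h | h
    · rw [← h, zero_smul, zero_add, show b = 1 by linarith, one_smul]
      exact hy
    rcases eq_or_lt_of_le hb with h' | h'
    · rw [← h', zero_smul, add_zero, show a = 1 by linarith, one_smul]
      exact hx
    exact (pd_smul hx h).add (pd_smul hy h')
  · intro x hx y hy a b ha hb hab
    rcases eq_or_lt_of_le ha with h | h
    · have hb1 : b = 1 := by linarith
      simp [← h, hb1]
    rcases eq_or_lt_of_le hb with h' | h'
    · have ha1 : a = 1 := by linarith
      simp [← h', ha1]
    have := logdet_concave_pair hx hy h h' hab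
    simpa [smul_eq_mul] using this

theorem stmt3 (ε : ℝ) (hε : 0 < ε) (d k : ℕ) (hd : 1 ≤ d) (hk : 1 ≤ k)
    (m : Fin k → ℕ) (hm : ∀ j, 1 ≤ m j)
    (Xc : (j : Fin k) → Matrix (Fin d) (Fin (m j)) ℝ) :
    Real.log
        (Matrix.det
          ((1 : Matrix (Fin d) (Fin d) ℝ) +
            ((d : ℝ) / (((∑ j, m j : ℕ) : ℝ) * ε ^ 2)) •
              (centered (hconcat Xc) * (centered (hconcat Xc))ᵀ)))
    ≥ ∑ j,
        ((m j : ℝ) / ((∑ j, m j : ℕ) : ℝ)) *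
          Real.log
            (Matrix.det
              ((1 : Matrix (Fin d) (Fin d) ℝ) +
                ((d : ℝ) / ((m j : ℝ) * ε ^ 2)) •
                  (centered (Xc j) * (centered (Xc j))ᵀ))) := by
  classical
  rw [ge_iff_le]
  set N : ℝ := ((∑ j, m j : ℕ) : ℝ) with hNdef
  have hNpos : 0 < N := by
    have h0 : 0 < ∑ j, m j :=
      Finset.sum_pos (fun j _ => hm j) ⟨⟨0, hk⟩, Finset.mem_univ _⟩
    rw [hNdef]
    exact_mod_cast h0
  have hε2 : (0:ℝ) < ε ^ 2 := by positivity
  have hdpos : (0:ℝ) < d := by exact_mod_cast hd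
  set c : ℝ := (d : ℝ) / (N * ε ^ 2) with hcdef
  have hcpos : 0 < c := by positivity
  set Sj : Fin k → Matrix (Fin d) (Fin d) ℝ :=
    fun j => centered (Xc j) * (centered (Xc j))ᵀ with hSjdef
  have hSjpsd : ∀ j, (Sj j).PosSemidef := by
    intro j
    have := Matrix.posSemidef_self_mul_conjTranspose (centered (Xc j))
    rwa [Matrix.conjTranspose_eq_transpose_of_trivial] at this
  set cj : Fin k → ℝ := fun j => (d : ℝ) / ((m j : ℝ) * ε ^ 2) with hcjdef
  have hmj : ∀ j, (0:ℝ) < (m j : ℝ) := fun j => by exact_mod_cast hm j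
  have hcj : ∀ j, 0 < cj j := fun j => by
    have := hmj j; positivity
  set P : Fin k → Matrix (Fin d) (Fin d) ℝ :=
    fun j => (1 : Matrix (Fin d) (Fin d) ℝ) + cj j • Sj j with hPdef
  have hPpd : ∀ j, (P j).PosDef :=
    fun j => Matrix.PosDef.add_posSemidef Matrix.PosDef.one (psd_smul (hSjpsd j) (hcj j).le)
  set w : Fin k → ℝ := fun j => (m j : ℝ) / N with hwdef
  have hw0 : ∀ j, 0 ≤ w j := fun j => by positivity
  have hw1 : ∑ j, w j = 1 := by
    have hNne : N ≠ 0 := hNpos.ne'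
    have hnum : (∑ j, ((m j : ℕ) : ℝ)) = N := by
      rw [hNdef]; push_cast; ring
    rw [hwdef, ← Finset.sum_div, hnum, div_self hNne]
  -- Jensen
  have jensen := logdet_concaveOn.le_map_sum (t := Finset.univ) (w := w) (p := P)
    (fun j _ => hw0 j) hw1 (fun j _ => hPpd j)
  -- identify the convex combination
  have hcomb : ∑ j, w j • P j = (1 : Matrix (Fin d) (Fin d) ℝ) + c • ∑ j, Sj j := by
    have hterm : ∀ j, w j • P j = w j • (1 : Matrix (Fin d) (Fin d) ℝ) + c • Sj j := by
      intro j
      rw [hPdef]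
      rw [smul_add, smul_smul]
      congr 2
      rw [hwdef, hcjdef, hcdef]
      have h1 : (m j : ℝ) ≠ 0 := (hmj j).ne'
      have h2 : N ≠ 0 := hNpos.ne'
      have h3 : ε ≠ 0 := hε.ne'
      field_simp
    simp_rw [hterm]
    rw [Finset.sum_add_distrib, ← Finset.sum_smul, hw1, one_smul, ← Finset.smul_sum]
  -- monotonicity step
  obtain ⟨W, hW⟩ := decomp hm Xc
  have hWpsd : (W * Wᵀ).PosSemidef := by
    have := Matrix.posSemidef_self_mul_conjTranspose W
    rwa [Matrix.conjTranspose_eq_transpose_of_trivial] at this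
  have hsumpsd : (∑ j, Sj j).PosSemidef := psd_sum _ _ fun j _ => hSjpsd j
  have hmono : ((1 : Matrix (Fin d) (Fin d) ℝ) + c • ∑ j, Sj j).det
      ≤ ((1 : Matrix (Fin d) (Fin d) ℝ)
          + c • (centered (hconcat Xc) * (centered (hconcat Xc))ᵀ)).det := by
    have h1 : (1 : Matrix (Fin d) (Fin d) ℝ)
        + c • (centered (hconcat Xc) * (centered (hconcat Xc))ᵀ)
        = (1 : Matrix (Fin d) (Fin d) ℝ) + c • ∑ j, Sj j + c • (W * Wᵀ) := by
      rw [hW, smul_add, add_assoc]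
    rw [h1]
    exact det_one_add_le (psd_smul hsumpsd hcpos.le) (psd_smul hWpsd hcpos.le)
  have hmidpd : ((1 : Matrix (Fin d) (Fin d) ℝ) + c • ∑ j, Sj j).PosDef :=
    Matrix.PosDef.add_posSemidef Matrix.PosDef.one (psd_smul hsumpsd hcpos.le)
  calc ∑ j, w j * Real.log (P j).det
      = ∑ j, w j • Real.log (P j).det := by simp [smul_eq_mul]
    _ ≤ Real.log (∑ j, w j • P j).det := jensen
    _ = Real.log ((1 : Matrix (Fin d) (Fin d) ℝ) + c • ∑ j, Sj j).det := by rw [hcomb]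
    _ ≤ Real.log ((1 : Matrix (Fin d) (Fin d) ℝ)
          + c • (centered (hconcat Xc) * (centered (hconcat Xc))ᵀ)).det :=
        Real.log_le_log hmidpd.det_pos hmono
end

section
/- Let ε > 0, d ≥ 1, k ≥ 1, and for each j = 1,…,k let X^j ∈ ℝ^{d×m_j} with m_j ≥ 1. Let X = [X^1,…,X^k] ∈ ℝ^{d×m} be the horizontal concatenation with m = Σ_j m_j, and let X̄ and X̄^j be the matrices X and X^j centered by their respective column means. Then equality log det(I_d + (d/(mε²))·X̄X̄ᵀ) = Σ_{j=1}^k (m_j/m)·log det(I_d + (d/(m_jε²))·X̄^j(X̄^j)ᵀ) holds if and only if X̄^1(X̄^1)ᵀ/m_1 = X̄^2(X̄^2)ᵀ/m_2 = ⋯ = X̄^k(X̄^k)ᵀ/m_k = X̄X̄ᵀ/m. -/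
open Matrix BigOperators

namespace Stmt4Aux

variable {d : ℕ}

local notation "Mat" => Matrix (Fin d) (Fin d) ℝ

lemma psd_smul {c : ℝ} (hc : 0 ≤ c) {A : Mat} (hA : A.PosSemidef) : (c • A).PosSemidef := by
  refine ⟨?_, fun x => ?_⟩
  · unfold Matrix.IsHermitian
    rw [conjTranspose_smul, hA.1.eq]
    simp
  · exact (hA.smul hc).2 x

lemma pd_smul {c : ℝ} (hc : 0 < c) {A : Mat} (hA : A.PosDef) : (c • A).PosDef := by
  refine ⟨(psd_smul hc.le hA.posSemidef).1, fun x hx => ?_⟩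
  exact (hA.smul hc).2 hx

lemma exists_sqrt {A : Mat} (hA : A.PosDef) :
    ∃ s : Mat, s.IsHermitian ∧ s * s = A ∧ s.det ≠ 0 := by
  open scoped MatrixOrder in
  exact ⟨CFC.sqrt A, (CFC.sqrt_nonneg A).posSemidef.1,
    CFC.sqrt_mul_sqrt_self A hA.posSemidef.nonneg, fun h => by
    have := hA.det_pos
    rw [← CFC.sqrt_mul_sqrt_self A hA.posSemidef.nonneg, det_mul, h, mul_zero] at this
    exact lt_irrefl _ this⟩

lemma det_smul_one_add_smul {C : Mat} (hC : C.IsHermitian) (a b : ℝ) :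
    (a • (1 : Mat) + b • C).det = ∏ i, (a + b * hC.eigenvalues i) := by
  set U : Mat := (hC.eigenvectorUnitary : Mat) with hU
  have hUU : U * star U = 1 := mem_unitaryGroup_iff.mp hC.eigenvectorUnitary.2
  set D : Mat := diagonal (RCLike.ofReal ∘ hC.eigenvalues) with hD
  have h1 : U * (a • (1 : Mat) + b • D) * star U = a • (1 : Mat) + b • C := by
    conv_rhs => rw [hC.spectral_theorem, Unitary.conjStarAlgAut_apply]
    rw [mul_add, add_mul, mul_smul_comm, mul_one, smul_mul_assoc, hUU,
      mul_smul_comm, smul_mul_assoc]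
  have hUnit : IsUnit U := by
    apply (isUnit_iff_isUnit_det U).mpr
    apply isUnit_iff_ne_zero.mpr
    intro h0
    have := congrArg det hUU
    rw [det_mul, h0, zero_mul, det_one] at this
    norm_num at this
  have hstar : star U = U⁻¹ := by
    apply inv_eq_right_inv hUU |>.symm
  have h2 : (a • (1 : Mat) + b • C).det = (a • (1 : Mat) + b • D).det := by
    rw [← h1, hstar, det_conj hUnit]
  rw [h2]
  have h3 : a • (1 : Mat) + b • D = diagonal (fun i => a + b * hC.eigenvalues i) := by
    rw [hD]
    ext i j
    by_cases hij : i = j <;>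
      simp [Matrix.diagonal, Matrix.one_apply, hij, mul_comm]
  rw [h3, det_diagonal]

lemma eq_smul_one_of_eigenvalues_const {C : Mat} (hC : C.IsHermitian) (t : ℝ)
    (h : ∀ i, hC.eigenvalues i = t) : C = t • 1 := by
  set U : Mat := (hC.eigenvectorUnitary : Mat) with hU
  have hUU : U * star U = 1 := mem_unitaryGroup_iff.mp hC.eigenvectorUnitary.2
  have hdiag : diagonal (RCLike.ofReal ∘ hC.eigenvalues) = t • (1 : Mat) := by
    ext i j
    by_cases hij : i = j <;>
      simp [Matrix.diagonal, Matrix.one_apply, hij, h i, h j]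
  conv_lhs => rw [hC.spectral_theorem, Unitary.conjStarAlgAut_apply]
  rw [hdiag, mul_smul_comm, mul_one, smul_mul_assoc, hUU]


/-- data extracted from a positive definite `x`: a hermitian invertible square root. -/
lemma conj_setup {x : Mat} (hx : x.PosDef) :
    ∃ s : Mat, s.IsHermitian ∧ s * s = x ∧ s.det ≠ 0 ∧
      s * s⁻¹ = 1 ∧ s⁻¹ * s = 1 ∧ (s⁻¹).IsHermitian := by
  obtain ⟨s, hsH, hss, hsd⟩ := exists_sqrt hx
  have hunit : IsUnit s.det := isUnit_iff_ne_zero.mpr hsd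
  exact ⟨s, hsH, hss, hsd, mul_nonsing_inv s hunit, nonsing_inv_mul s hunit, hsH.inv⟩

lemma sandwich (s y : Mat) (h1 : s * s⁻¹ = 1) (h2 : s⁻¹ * s = 1) :
    s * (s⁻¹ * y * s⁻¹) * s = y := by
  simp only [Matrix.mul_assoc, h2, Matrix.mul_one]
  rw [← Matrix.mul_assoc, h1, Matrix.one_mul]

lemma det_le_det_add_psd {x Q : Mat} (hx : x.PosDef) (hQ : Q.PosSemidef) :
    x.det ≤ (x + Q).det ∧ ((x + Q).det = x.det → Q = 0) := by
  obtain ⟨s, hsH, hss, hsd, h1, h2, hsiH⟩ := conj_setup hx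
  set R : Mat := s⁻¹ * Q * s⁻¹ with hR
  have hRpsd : R.PosSemidef := by
    have := hQ.mul_mul_conjTranspose_same s⁻¹
    rwa [hsiH.eq] at this
  have hQR : s * R * s = Q := sandwich s Q h1 h2
  have hfact : x + Q = s * ((1:ℝ) • (1 : Mat) + (1:ℝ) • R) * s := by
    rw [one_smul, one_smul, mul_add, add_mul, mul_one, hss, hQR]
  have hdet : (x + Q).det = x.det * (∏ i, (1 + 1 * hRpsd.1.eigenvalues i)) := by
    rw [hfact, det_mul, det_mul, det_smul_one_add_smul hRpsd.1 1 1, ← hss, det_mul]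
    ring
  have hprod_ge : (1:ℝ) ≤ ∏ i, (1 + 1 * hRpsd.1.eigenvalues i) := by
    have := Finset.prod_le_prod (s := Finset.univ)
      (f := fun _ : Fin d => (1:ℝ)) (g := fun i => 1 + 1 * hRpsd.1.eigenvalues i)
      (fun i _ => by norm_num) (fun i _ => by
        have := hRpsd.eigenvalues_nonneg i; nlinarith)
    simpa using this
  constructor
  · rw [hdet]
    nlinarith [hx.det_pos]
  · intro heq
    rw [hdet] at heq
    have hprod1 : (∏ i, (1 + 1 * hRpsd.1.eigenvalues i)) = 1 := by
      have hx0 := hx.det_pos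
      apply mul_left_cancel₀ hx0.ne'
      rw [mul_one]
      linarith
    have hev0 : ∀ i, hRpsd.1.eigenvalues i = 0 := by
      intro i
      by_contra hne
      have hipos : 0 < hRpsd.1.eigenvalues i := (hRpsd.eigenvalues_nonneg i).lt_of_ne' hne
      have : (1:ℝ) < ∏ j, (1 + 1 * hRpsd.1.eigenvalues j) := by
        calc (1:ℝ) = ∏ _j : Fin d, (1:ℝ) := by simp
        _ < ∏ j, (1 + 1 * hRpsd.1.eigenvalues j) := by
          apply Finset.prod_lt_prod (fun j _ => by norm_num)
            (fun j _ => by have := hRpsd.eigenvalues_nonneg j; nlinarith)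
            ⟨i, Finset.mem_univ i, by nlinarith⟩
      rw [hprod1] at this; exact lt_irrefl _ this
    have hR0 : R = 0 := by
      have := eq_smul_one_of_eigenvalues_const hRpsd.1 0 hev0
      simpa using this
    rw [← hQR, hR0, Matrix.mul_zero, Matrix.zero_mul]


lemma logdet_strictConcaveOn :
    StrictConcaveOn ℝ {A : Mat | A.PosDef} (fun A => Real.log A.det) := by
  constructor
  · -- convexity of the set of positive definite matrices
    intro x hx y hy a b ha hb hab
    rcases eq_or_lt_of_le ha with ha0 | ha
    · have hb1 : b = 1 := by linarith
      simp only [← ha0, hb1, zero_smul, one_smul, zero_add]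
      exact hy
    rcases eq_or_lt_of_le hb with hb0 | hb
    · have ha1 : a = 1 := by linarith
      simp only [← hb0, ha1, zero_smul, one_smul, add_zero]
      exact hx
    exact (pd_smul ha hx).add (pd_smul hb hy)
  · rintro x (hx : x.PosDef) y (hy : y.PosDef) hxy a b ha hb hab
    obtain ⟨s, hsH, hss, hsd, h1, h2, hsiH⟩ := conj_setup hx
    set C : Mat := s⁻¹ * y * s⁻¹ with hC
    have hCpsd : C.PosSemidef := by
      have := hy.posSemidef.mul_mul_conjTranspose_same s⁻¹
      rwa [hsiH.eq] at this
    have hyC : s * C * s = y := sandwich s y h1 h2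
    have hdetC : C.det = (s.det)⁻¹ * y.det * (s.det)⁻¹ := by
      rw [hC, det_mul, det_mul, det_nonsing_inv]
      simp [Ring.inverse_eq_inv]
    have hdetCpos : 0 < C.det := by
      rw [hdetC]
      have h3 := hy.det_pos
      have h4 : 0 < (s.det)⁻¹ * (s.det)⁻¹ := mul_self_pos.mpr (inv_ne_zero hsd)
      nlinarith
    set μ : Fin d → ℝ := hCpsd.1.eigenvalues with hμ
    have hdetC' : C.det = ∏ i, μ i := by
      have := hCpsd.1.det_eq_prod_eigenvalues
      simpa using this
    have hμpos : ∀ i, 0 < μ i := by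
      intro i
      refine (hCpsd.eigenvalues_nonneg i).lt_of_ne' fun h0 => ?_
      have : C.det = 0 := by
        rw [hdetC']
        exact Finset.prod_eq_zero (Finset.mem_univ i) h0
      rw [this] at hdetCpos; exact lt_irrefl _ hdetCpos
    -- the convex combination
    have hcomb : a • x + b • y = s * (a • (1 : Mat) + b • C) * s := by
      rw [mul_add, add_mul, mul_smul_comm, mul_one, smul_mul_assoc, hss,
        mul_smul_comm, smul_mul_assoc, hyC]
    have hdetx : x.det = s.det * s.det := by rw [← hss, det_mul]
    have hdetxpos := hx.det_pos
    have hdety : y.det = x.det * C.det := by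
      rw [← hyC, det_mul, det_mul, hdetx]; ring
    have hdetcomb : (a • x + b • y).det = x.det * (∏ i, (a + b * μ i)) := by
      rw [hcomb, det_mul, det_mul, det_smul_one_add_smul hCpsd.1 a b, hdetx]
      ring
    -- some eigenvalue differs from 1
    have hone : ∃ i, μ i ≠ 1 := by
      by_contra hall
      push_neg at hall
      have : C = (1:ℝ) • (1 : Mat) := eq_smul_one_of_eigenvalues_const hCpsd.1 1 hall
      rw [one_smul] at this
      apply hxy
      rw [← hyC, this, Matrix.mul_one, hss]
    obtain ⟨i0, hi0⟩ := hone
    -- scalar concavity of log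
    have hpt : ∀ i, b * Real.log (μ i) ≤ Real.log (a + b * μ i) := by
      intro i
      have := (strictConcaveOn_log_Ioi.concaveOn).2 (Set.mem_Ioi.mpr one_pos)
        (Set.mem_Ioi.mpr (hμpos i)) ha.le hb.le hab
      simpa [smul_eq_mul] using this
    have hpt0 : b * Real.log (μ i0) < Real.log (a + b * μ i0) := by
      have := strictConcaveOn_log_Ioi.2 (Set.mem_Ioi.mpr one_pos)
        (Set.mem_Ioi.mpr (hμpos i0)) (fun h => hi0 (by simpa using h.symm)) ha hb hab
      simpa [smul_eq_mul] using this
    have hsum : ∑ i, b * Real.log (μ i) < ∑ i, Real.log (a + b * μ i) :=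
      Finset.sum_lt_sum (fun i _ => hpt i) ⟨i0, Finset.mem_univ i0, hpt0⟩
    -- assemble
    have hlogC : Real.log C.det = ∑ i, Real.log (μ i) := by
      rw [hdetC']
      exact Real.log_prod (fun i _ => (hμpos i).ne')
    have habpos : ∀ i, 0 < a + b * μ i := fun i => by nlinarith [hμpos i]
    have hlogcomb : Real.log (a • x + b • y).det
        = Real.log x.det + ∑ i, Real.log (a + b * μ i) := by
      rw [hdetcomb, Real.log_mul hdetxpos.ne' (Finset.prod_pos (fun i _ => habpos i)).ne', Real.log_prod]
      intro i _
      exact (habpos i).ne'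
    have hlogy : Real.log y.det = Real.log x.det + Real.log C.det := by
      rw [hdety, Real.log_mul hdetxpos.ne' hdetCpos.ne']
    simp only [smul_eq_mul]
    rw [hlogy, hlogcomb, hlogC]
    rw [← Finset.mul_sum] at hsum
    have hL : a * Real.log x.det + b * Real.log x.det = Real.log x.det := by
      rw [← add_mul, hab, one_mul]
    have hexp : b * (Real.log x.det + ∑ i, Real.log (μ i))
        = b * Real.log x.det + b * ∑ i, Real.log (μ i) := mul_add _ _ _
    linarith [hsum]


/-- Analytic core: equality in the concatenated log-det identity forces the
perturbation to vanish and all blocks to be equal. -/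
lemma main_core {k : ℕ} (w : Fin k → ℝ) (hw : ∀ j, 0 < w j) (hw1 : ∑ j, w j = 1)
    (A : Fin k → Mat) (hA : ∀ j, (A j).PosDef) (Pm : Mat) (hP : Pm.PosSemidef)
    (cP : ℝ) (hcP : 0 < cP)
    (h : Real.log ((∑ j, w j • A j) + cP • Pm).det = ∑ j, w j * Real.log (A j).det) :
    Pm = 0 ∧ ∀ j j', A j = A j' := by
  have hconc := logdet_strictConcaveOn (d := d)
  set B : Mat := ∑ j, w j • A j with hB
  have hBpd : B.PosDef := by
    have := hconc.1.sum_mem (t := Finset.univ) (fun j _ => (hw j).le) hw1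
      (fun j _ => hA j)
    exact this
  have hPsm : (cP • Pm).PosSemidef := psd_smul hcP.le hP
  have hmono := det_le_det_add_psd hBpd hPsm
  have hBdetpos := hBpd.det_pos
  have hBPdetpos : 0 < (B + cP • Pm).det := lt_of_lt_of_le hBdetpos hmono.1
  -- Jensen
  have h1 : ∑ j, w j * Real.log (A j).det ≤ Real.log B.det := by
    have := hconc.concaveOn.le_map_sum (t := Finset.univ)
      (fun j _ => (hw j).le) hw1 (fun j _ => hA j)
    simpa [smul_eq_mul] using this
  have h2 : Real.log B.det ≤ Real.log (B + cP • Pm).det :=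
    Real.log_le_log hBdetpos hmono.1
  have heq1 : Real.log B.det = ∑ j, w j * Real.log (A j).det :=
    le_antisymm (by rw [← h]; exact h2) h1
  have heq2 : Real.log (B + cP • Pm).det = Real.log B.det := by
    rw [h, heq1]
  have hdet_eq : (B + cP • Pm).det = B.det :=
    Real.log_injOn_pos (Set.mem_Ioi.mpr hBPdetpos) (Set.mem_Ioi.mpr hBdetpos) heq2
  have hP0 : cP • Pm = 0 := hmono.2 hdet_eq
  constructor
  · rcases smul_eq_zero.mp hP0 with h' | h'
    · exact absurd h' hcP.ne'
    · exact h'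
  · have := hconc.eq_of_map_sum_eq (t := Finset.univ)
      (fun j _ => hw j) hw1 (fun j _ => hA j)
      (by rw [heq1]; simp [smul_eq_mul])
    exact fun j j' => this (Finset.mem_univ j) (Finset.mem_univ j')


lemma scalar_decomp {n : ℕ} (hn : 0 < n) (f g : Fin n → ℝ) (u v : ℝ) :
    ∑ l, (f l - u) * (g l - v)
      = (∑ l, (f l - (∑ l', f l') / n) * (g l - (∑ l', g l') / n))
        + (n : ℝ) * (((∑ l', f l') / n - u) * ((∑ l', g l') / n - v)) := by
  have hn' : (n : ℝ) ≠ 0 := Nat.cast_ne_zero.mpr hn.ne'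
  simp only [sub_mul, mul_sub, Finset.sum_sub_distrib, ← Finset.sum_mul, ← Finset.mul_sum,
    Finset.sum_const, Finset.card_univ, Fintype.card_fin, nsmul_eq_mul]
  field_simp
  ring

lemma vecMulVec_psd (v : Fin d → ℝ) :
    (Matrix.of fun i i' => v i * v i' : Mat).PosSemidef := by
  refine .of_dotProduct_mulVec_nonneg ?_ (fun x => ?_)
  · ext i j
    simp [Matrix.conjTranspose_apply, mul_comm]
  · have : (Matrix.of fun i i' => v i * v i' : Mat) *ᵥ x = (∑ i', v i' * x i') • v := by
      ext i
      simp [Matrix.mulVec, dotProduct, Finset.mul_sum, Finset.sum_mul, mul_comm, mul_assoc,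
        mul_left_comm]
    rw [this]
    have : star x ⬝ᵥ (∑ i', v i' * x i') • v = (∑ i', v i' * x i') * (∑ i, x i * v i) := by
      simp [dotProduct, Finset.mul_sum, mul_comm, mul_assoc, mul_left_comm]
    rw [this]
    have hcomm : (∑ i, x i * v i) = (∑ i', v i' * x i') := by
      congr 1; ext i; ring
    rw [hcomm]
    exact mul_self_nonneg _


lemma centered_decomp {k : ℕ} {m : Fin k → ℕ} (hm : ∀ j, 1 ≤ m j)
    (Xc : (j : Fin k) → Matrix (Fin d) (Fin (m j)) ℝ) :
    centered (hconcat Xc) * (centered (hconcat Xc))ᵀ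
      = (∑ j, centered (Xc j) * (centered (Xc j))ᵀ)
        + ∑ j, (m j : ℝ) • (Matrix.of fun i i' =>
            (colMean (Xc j) i - colMean (hconcat Xc) i) *
            (colMean (Xc j) i' - colMean (hconcat Xc) i') : Mat) := by
  ext i i'
  set μ : Fin d → ℝ := colMean (hconcat Xc) with hμdef
  simp only [Matrix.add_apply, Matrix.sum_apply, Matrix.mul_apply, Matrix.transpose_apply,
    Matrix.smul_apply, Matrix.of_apply, smul_eq_mul]
  have hL : ∀ p : (j : Fin k) × Fin (m j),
      centered (hconcat Xc) i p = Xc p.1 i p.2 - μ i := by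
    intro p; rfl
  have hL' : ∀ p : (j : Fin k) × Fin (m j),
      centered (hconcat Xc) i' p = Xc p.1 i' p.2 - μ i' := by
    intro p; rfl
  simp only [hL, hL']
  rw [← Finset.univ_sigma_univ, Finset.sum_sigma]
  rw [← Finset.sum_add_distrib]
  refine Finset.sum_congr rfl fun j _ => ?_
  have hcm : ∀ i'', colMean (Xc j) i'' = (∑ l, Xc j i'' l) / (m j : ℝ) := by
    intro i''; simp [colMean, Fintype.card_fin]
  have hcent : ∀ i'' l, centered (Xc j) i'' l = Xc j i'' l - (∑ l', Xc j i'' l') / (m j : ℝ) := by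
    intro i'' l; simp [centered, hcm]
  simp only [hcent, hcm]
  exact scalar_decomp (hm j) (fun l => Xc j i l) (fun l => Xc j i' l) (μ i) (μ i')


lemma cov_psd {ι : Type} [Fintype ι] (Y : Matrix (Fin d) ι ℝ) :
    (centered Y * (centered Y)ᵀ).PosSemidef := by
  have h : (centered Y)ᵀ = (centered Y)ᴴ := by
    ext i j; simp [Matrix.conjTranspose_apply]
  rw [h]
  exact posSemidef_self_mul_conjTranspose _

lemma psd_sum {k : ℕ} (F : Fin k → Mat) (h : ∀ j, (F j).PosSemidef) :
    (∑ j, F j).PosSemidef :=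
  Finset.sum_induction F Matrix.PosSemidef (fun _ _ ha hb => ha.add hb)
    Matrix.PosSemidef.zero (fun j _ => h j)

end Stmt4Aux

theorem stmt4 (ε : ℝ) (hε : 0 < ε) (d k : ℕ) (hd : 1 ≤ d) (hk : 1 ≤ k)
    (m : Fin k → ℕ) (hm : ∀ j, 1 ≤ m j)
    (Xc : (j : Fin k) → Matrix (Fin d) (Fin (m j)) ℝ) :
    (Real.log
        (Matrix.det
          ((1 : Matrix (Fin d) (Fin d) ℝ) +
            ((d : ℝ) / (((∑ j, m j : ℕ) : ℝ) * ε ^ 2)) •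
              (centered (hconcat Xc) * (centered (hconcat Xc))ᵀ)))
      = ∑ j,
          ((m j : ℝ) / ((∑ j, m j : ℕ) : ℝ)) *
            Real.log
              (Matrix.det
                ((1 : Matrix (Fin d) (Fin d) ℝ) +
                  ((d : ℝ) / ((m j : ℝ) * ε ^ 2)) •
                    (centered (Xc j) * (centered (Xc j))ᵀ))))
    ↔ ∀ j, (1 / (m j : ℝ)) • (centered (Xc j) * (centered (Xc j))ᵀ)
        = (1 / ((∑ j, m j : ℕ) : ℝ)) • (centered (hconcat Xc) * (centered (hconcat Xc))ᵀ) := by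
  classical
  have hkne : Nonempty (Fin k) := ⟨⟨0, hk⟩⟩
  set Mn : ℕ := ∑ j, m j with hMn
  have hMpos : 0 < Mn := by
    rw [hMn]
    exact Finset.sum_pos (fun j _ => hm j) Finset.univ_nonempty
  have hMR : (0:ℝ) < (Mn:ℝ) := Nat.cast_pos.mpr hMpos
  have hdR : (0:ℝ) < (d:ℝ) := by exact_mod_cast hd
  have hε2 : (0:ℝ) < ε ^ 2 := by positivity
  have hmR : ∀ j, (0:ℝ) < (m j : ℝ) := fun j => Nat.cast_pos.mpr (hm j)
  set S : Matrix (Fin d) (Fin d) ℝ :=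
    centered (hconcat Xc) * (centered (hconcat Xc))ᵀ with hSdef
  have hw1 : ∑ j, (m j : ℝ) / (Mn : ℝ) = 1 := by
    rw [← Finset.sum_div]
    rw [show (∑ j, (m j : ℝ)) = (Mn : ℝ) from by rw [hMn]; exact (Nat.cast_sum _ _).symm]
    field_simp
  constructor
  · -- hard direction
    intro h
    -- the between-group matrix
    set P : Matrix (Fin d) (Fin d) ℝ :=
      ∑ j, (m j : ℝ) • (Matrix.of fun i i' =>
        (colMean (Xc j) i - colMean (hconcat Xc) i) *
        (colMean (Xc j) i' - colMean (hconcat Xc) i')) with hPdef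
    have hPpsd : P.PosSemidef := by
      rw [hPdef]
      exact Stmt4Aux.psd_sum _ (fun j => Stmt4Aux.psd_smul (hmR j).le (Stmt4Aux.vecMulVec_psd _))
    have hdecomp : S = (∑ j, centered (Xc j) * (centered (Xc j))ᵀ) + P := by
      rw [hSdef, hPdef]
      exact Stmt4Aux.centered_decomp hm Xc
    have hApd : ∀ j, ((1 : Matrix (Fin d) (Fin d) ℝ) +
        ((d : ℝ) / ((m j : ℝ) * ε ^ 2)) • (centered (Xc j) * (centered (Xc j))ᵀ)).PosDef := by
      intro j
      have hc0 : (0:ℝ) ≤ (d : ℝ) / ((m j : ℝ) * ε ^ 2) := by positivity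
      exact Matrix.PosDef.one.add_posSemidef (Stmt4Aux.psd_smul hc0 (Stmt4Aux.cov_psd _))
    have hkey : (∑ j, ((m j : ℝ) / (Mn : ℝ)) • ((1 : Matrix (Fin d) (Fin d) ℝ) +
          ((d : ℝ) / ((m j : ℝ) * ε ^ 2)) • (centered (Xc j) * (centered (Xc j))ᵀ)))
          + ((d : ℝ) / ((Mn : ℝ) * ε ^ 2)) • P
        = (1 : Matrix (Fin d) (Fin d) ℝ) + ((d : ℝ) / ((Mn : ℝ) * ε ^ 2)) • S := by
      have h1 : ∀ j, ((m j : ℝ) / (Mn : ℝ)) • ((1 : Matrix (Fin d) (Fin d) ℝ) +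
            ((d : ℝ) / ((m j : ℝ) * ε ^ 2)) • (centered (Xc j) * (centered (Xc j))ᵀ))
          = ((m j : ℝ) / (Mn : ℝ)) • (1 : Matrix (Fin d) (Fin d) ℝ) +
            ((d : ℝ) / ((Mn : ℝ) * ε ^ 2)) • (centered (Xc j) * (centered (Xc j))ᵀ) := by
        intro j
        rw [smul_add, smul_smul]
        congr 2
        rw [div_mul_div_comm, div_eq_div_iff (mul_pos hMR (mul_pos (hmR j) hε2)).ne'
          (mul_pos hMR hε2).ne']
        ring
      rw [Finset.sum_congr rfl (fun j _ => h1 j), Finset.sum_add_distrib,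
        ← Finset.sum_smul, hw1, one_smul, ← Finset.smul_sum, hdecomp, smul_add, add_assoc]
    have h' : Real.log ((∑ j, ((m j : ℝ) / (Mn : ℝ)) •
          ((1 : Matrix (Fin d) (Fin d) ℝ) +
            ((d : ℝ) / ((m j : ℝ) * ε ^ 2)) • (centered (Xc j) * (centered (Xc j))ᵀ)))
          + ((d : ℝ) / ((Mn : ℝ) * ε ^ 2)) • P).det
        = ∑ j, ((m j : ℝ) / (Mn : ℝ)) * Real.log ((1 : Matrix (Fin d) (Fin d) ℝ) +
            ((d : ℝ) / ((m j : ℝ) * ε ^ 2)) • (centered (Xc j) * (centered (Xc j))ᵀ)).det := by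
      rw [hkey]
      exact h
    have hcore := Stmt4Aux.main_core
      (w := fun j => (m j : ℝ) / (Mn : ℝ))
      (fun j => div_pos (hmR j) hMR) hw1
      (A := fun j => (1 : Matrix (Fin d) (Fin d) ℝ) +
        ((d : ℝ) / ((m j : ℝ) * ε ^ 2)) • (centered (Xc j) * (centered (Xc j))ᵀ))
      hApd P hPpsd ((d : ℝ) / ((Mn : ℝ) * ε ^ 2)) (by positivity) h'
    obtain ⟨hP0, hAeq⟩ := hcore
    have hSsum : S = ∑ j, centered (Xc j) * (centered (Xc j))ᵀ := by
      rw [hdecomp, hP0, add_zero]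
    -- from equality of the A's, equality of the scaled covariances
    have hscale : ∀ j j', (1 / (m j : ℝ)) • (centered (Xc j) * (centered (Xc j))ᵀ)
        = (1 / (m j' : ℝ)) • (centered (Xc j') * (centered (Xc j'))ᵀ) := by
      intro j j'
      have h2 := hAeq j j'
      have h3 : ((d : ℝ) / ((m j : ℝ) * ε ^ 2)) • (centered (Xc j) * (centered (Xc j))ᵀ)
          = ((d : ℝ) / ((m j' : ℝ) * ε ^ 2)) • (centered (Xc j') * (centered (Xc j'))ᵀ) :=
        add_left_cancel h2
      have h4 : ∀ (j'' : Fin k),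
          (1 / (m j'' : ℝ)) • (centered (Xc j'') * (centered (Xc j''))ᵀ)
          = (ε ^ 2 / (d : ℝ)) • (((d : ℝ) / ((m j'' : ℝ) * ε ^ 2)) •
              (centered (Xc j'') * (centered (Xc j''))ᵀ)) := by
        intro j''
        rw [smul_smul]
        congr 1
        rw [div_mul_div_comm, div_eq_div_iff (hmR j'').ne' (mul_pos hdR (mul_pos (hmR j'') hε2)).ne']
        ring
      rw [h4 j, h4 j', h3]
    intro j
    have hT : ∀ j', centered (Xc j') * (centered (Xc j'))ᵀ
        = (m j' : ℝ) • ((1 / (m j : ℝ)) • (centered (Xc j) * (centered (Xc j))ᵀ)) := by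
      intro j'
      rw [← hscale j' j, smul_smul]
      rw [show (m j' : ℝ) * (1 / (m j' : ℝ)) = 1 from by rw [mul_one_div, div_self (hmR j').ne'], one_smul]
    rw [hSsum, Finset.sum_congr rfl (fun j' _ => hT j'), ← Finset.sum_smul]
    rw [show (∑ j', (m j' : ℝ)) = (Mn : ℝ) from by rw [hMn]; exact (Nat.cast_sum _ _).symm]
    rw [smul_smul]
    rw [show (1 / (Mn : ℝ)) * (Mn : ℝ) = 1 from by rw [one_div, inv_mul_cancel₀ hMR.ne'], one_smul]
  · -- easy direction
    intro hyp
    have hAeq : ∀ j, ((d : ℝ) / ((m j : ℝ) * ε ^ 2)) • (centered (Xc j) * (centered (Xc j))ᵀ)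
        = ((d : ℝ) / ((Mn : ℝ) * ε ^ 2)) • S := by
      intro j
      have h1 := hyp j
      have hstep : ((d : ℝ) / ((m j : ℝ) * ε ^ 2)) • (centered (Xc j) * (centered (Xc j))ᵀ)
          = (((d : ℝ) * (m j : ℝ)) / ((m j : ℝ) * ε ^ 2)) •
              ((1 / (m j : ℝ)) • (centered (Xc j) * (centered (Xc j))ᵀ)) := by
        rw [smul_smul]
        congr 1
        rw [div_mul_div_comm,
          div_eq_div_iff (mul_pos (hmR j) hε2).ne' (mul_pos (mul_pos (hmR j) hε2) (hmR j)).ne']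
        ring
      rw [hstep, h1, smul_smul]
      congr 1
      rw [div_mul_div_comm,
        div_eq_div_iff (mul_pos (mul_pos (hmR j) hε2) hMR).ne' (mul_pos hMR hε2).ne']
      ring
    have hsum : ∑ j, ((m j : ℝ) / (Mn : ℝ)) *
          Real.log ((1 : Matrix (Fin d) (Fin d) ℝ) +
            ((d : ℝ) / ((m j : ℝ) * ε ^ 2)) • (centered (Xc j) * (centered (Xc j))ᵀ)).det
        = ∑ j, ((m j : ℝ) / (Mn : ℝ)) *
          Real.log ((1 : Matrix (Fin d) (Fin d) ℝ) +
            ((d : ℝ) / ((Mn : ℝ) * ε ^ 2)) • S).det :=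
      Finset.sum_congr rfl fun j _ => by rw [hAeq j]
    rw [hsum, ← Finset.sum_mul, hw1, one_mul]
end

section
/- Let ε > 0, d ≥ 1, k ≥ 1, and for each j = 1,…,k let X^j ∈ ℝ^{d×m_j} with m_j ≥ 1. Let X = [X^1,…,X^k] ∈ ℝ^{d×m} be the horizontal concatenation with m = Σ_j m_j. Then the coding rate of the whole dataset is at least the sum of the coding rates of its parts: (m/2)·log det(I_d + (d/(mε²))·XXᵀ) ≥ Σ_{j=1}^k (m_j/2)·log det(I_d + (d/(m_jε²))·X^j(X^j)ᵀ). -/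
open Matrix BigOperators

section Aux
variable {n : Type*} [Fintype n] [DecidableEq n]

lemma mySmulPSD {A : Matrix n n ℝ} (hA : A.PosSemidef) {c : ℝ} (hc : 0 ≤ c) :
    (c • A).PosSemidef := by
  refine posSemidef_iff_dotProduct_mulVec.2 ⟨?_, fun x => ?_⟩
  · show (c • A)ᴴ = c • A
    rw [conjTranspose_smul, star_trivial, hA.1.eq]
  · rw [smul_mulVec, dotProduct_smul, smul_eq_mul]
    exact mul_nonneg hc (hA.dotProduct_mulVec_nonneg x)

lemma mySmulPD {A : Matrix n n ℝ} (hA : A.PosDef) {c : ℝ} (hc : 0 < c) :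
    (c • A).PosDef := by
  refine posDef_iff_dotProduct_mulVec.2 ⟨(mySmulPSD hA.posSemidef hc.le).1, fun x hx => ?_⟩
  rw [smul_mulVec, dotProduct_smul, smul_eq_mul]
  exact mul_pos hc (hA.dotProduct_mulVec_pos hx)

lemma myConjPD {B C : Matrix n n ℝ} (hB : B.PosDef) (hC : IsUnit C.det) :
    (Cᴴ * B * C).PosDef := by
  refine posDef_iff_dotProduct_mulVec.2 ⟨isHermitian_conjTranspose_mul_mul C hB.1, fun x hx => ?_⟩
  have hx' : C *ᵥ x ≠ 0 := by
    intro h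
    apply hx
    have hinj := Matrix.mulVec_injective_iff_isUnit.2 ((Matrix.isUnit_iff_isUnit_det C).2 hC)
    exact hinj (by simpa using h)
  simpa only [star_mulVec, dotProduct_mulVec, vecMul_vecMul] using hB.dotProduct_mulVec_pos hx'

lemma myDetComb {M : Matrix n n ℝ} (hM : M.IsHermitian) (a b : ℝ) :
    (a • 1 + b • M).det = ∏ i, (a + b * hM.eigenvalues i) := by
  set U : Matrix n n ℝ := (hM.eigenvectorUnitary : Matrix n n ℝ) with hU
  have h1 : U * star U = 1 := Matrix.mem_unitaryGroup_iff.mp hM.eigenvectorUnitary.2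
  have h2 : star U * U = 1 := Matrix.mem_unitaryGroup_iff'.mp hM.eigenvectorUnitary.2
  have key : a • 1 + b • M = U * (a • 1 + b • diagonal (RCLike.ofReal ∘ hM.eigenvalues)) * star U := by
    rw [mul_add, add_mul, Matrix.mul_smul, Matrix.smul_mul, Matrix.mul_one, h1,
      Matrix.mul_smul, Matrix.smul_mul]
    conv_lhs => rw [hM.spectral_theorem, Unitary.conjStarAlgAut_apply]
  rw [key, det_mul, det_mul, mul_comm, ← mul_assoc, ← det_mul, h2, det_one, one_mul]
  have hdiag : a • (1 : Matrix n n ℝ) + b • diagonal (RCLike.ofReal ∘ hM.eigenvalues)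
      = diagonal (fun i => a + b * hM.eigenvalues i) := by
    ext i j
    rcases eq_or_ne i j with h | h
    · subst h
      simp [Matrix.one_apply, RCLike.ofReal]
    · simp [Matrix.one_apply_ne h, Matrix.diagonal_apply_ne _ h]
  rw [hdiag, det_diagonal]

open scoped MatrixOrder in
lemma myLogDetPair {A B : Matrix n n ℝ} (hA : A.PosDef) (hB : B.PosDef)
    {a b : ℝ} (ha : 0 ≤ a) (hb : 0 ≤ b) (hab : a + b = 1) :
    a * Real.log A.det + b * Real.log B.det ≤ Real.log (a • A + b • B).det := by
  rcases ha.eq_or_lt with h | ha'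
  · have hb1 : b = 1 := by linarith
    simp [← h, hb1]
  rcases hb.eq_or_lt with h | hb'
  · have ha1 : a = 1 := by linarith
    simp [← h, ha1]
  set S := CFC.sqrt A with hSdef
  have hS2 : S * S = A := CFC.sqrt_mul_sqrt_self A hA.posSemidef.nonneg
  have hSH : S.IsHermitian := (CFC.sqrt_nonneg A).posSemidef.1
  have detS2 : S.det * S.det = A.det := by rw [← det_mul, hS2]
  have detA_pos : 0 < A.det := hA.det_pos
  have detB_pos : 0 < B.det := hB.det_pos
  have hSdet : S.det ≠ 0 := by
    intro h; rw [h, mul_zero] at detS2; exact detA_pos.ne (detS2)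
  have hSunit : IsUnit S.det := isUnit_iff_ne_zero.2 hSdet
  have hSinvH : (S⁻¹)ᴴ = S⁻¹ := by rw [conjTranspose_nonsing_inv, hSH.eq]
  set M := S⁻¹ * B * S⁻¹ with hMdef
  have hMPD : M.PosDef := by
    have hinv : IsUnit (S⁻¹).det := S.isUnit_nonsing_inv_det hSunit
    have h := myConjPD hB hinv
    rwa [hSinvH] at h
  have hSS : S * S⁻¹ = 1 := mul_nonsing_inv S hSunit
  have hSS' : S⁻¹ * S = 1 := nonsing_inv_mul S hSunit
  have hSMS : S * M * S = B := by
    rw [hMdef, show S * (S⁻¹ * B * S⁻¹) * S = S * S⁻¹ * B * (S⁻¹ * S) by noncomm_ring,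
      hSS, hSS', one_mul, mul_one]
  have hdecomp : a • A + b • B = S * (a • 1 + b • M) * S := by
    rw [mul_add, add_mul, Matrix.mul_smul, Matrix.smul_mul, Matrix.mul_one, hS2,
      Matrix.mul_smul, Matrix.smul_mul, hSMS]
  have hdetM : M.det = B.det / A.det := by
    rw [hMdef, det_mul, det_mul, det_nonsing_inv, Ring.inverse_eq_inv]
    field_simp [← detS2]
    rw [← detS2]; ring
  have hμ := hMPD.eigenvalues_pos
  set μ := hMPD.1.eigenvalues with hμdef
  have hcomb : (a • 1 + b • M).det = ∏ i, (a + b * μ i) := myDetComb hMPD.1 a b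
  have hterm_pos : ∀ i, 0 < a + b * μ i := fun i =>
    add_pos ha' (mul_pos hb' (hμ i))
  have hdet_eq : (a • A + b • B).det = A.det * ∏ i, (a + b * μ i) := by
    rw [hdecomp, det_mul, det_mul, ← hcomb]
    rw [← detS2]; ring
  have hlog_each : ∀ i, b * Real.log (μ i) ≤ Real.log (a + b * μ i) := by
    intro i
    have hc := strictConcaveOn_log_Ioi.concaveOn.2 (Set.mem_Ioi.2 one_pos)
      (Set.mem_Ioi.2 (hμ i)) ha hb hab
    simpa [smul_eq_mul] using hc
  have hlogdetM : Real.log M.det = ∑ i, Real.log (μ i) := by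
    rw [hMPD.1.det_eq_prod_eigenvalues]
    push_cast
    exact Real.log_prod (fun i _ => (hμ i).ne')
  have hsum : b * Real.log M.det ≤ ∑ i, Real.log (a + b * μ i) := by
    rw [hlogdetM, Finset.mul_sum]
    exact Finset.sum_le_sum fun i _ => hlog_each i
  have hlogtotal : Real.log (a • A + b • B).det
      = Real.log A.det + ∑ i, Real.log (a + b * μ i) := by
    rw [hdet_eq, Real.log_mul detA_pos.ne' (Finset.prod_pos (fun i _ => hterm_pos i)).ne',
      Real.log_prod (fun i _ => (hterm_pos i).ne')]
  have hdivlog : Real.log M.det = Real.log B.det - Real.log A.det := by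
    rw [hdetM, Real.log_div detB_pos.ne' detA_pos.ne']
  rw [hlogtotal]
  have hb1 : a = 1 - b := by linarith
  have e1 : a * Real.log A.det = Real.log A.det - b * Real.log A.det := by rw [hb1]; ring
  have e2 : b * Real.log M.det = b * Real.log B.det - b * Real.log A.det := by
    rw [hdivlog]; ring
  linarith [hsum]

lemma myConvexPD : Convex ℝ {A : Matrix n n ℝ | A.PosDef} := by
  intro A hA B hB a b ha hb hab
  rcases ha.eq_or_lt with h | ha'
  · have hb1 : b = 1 := by linarith
    simpa [← h, hb1] using hB
  rcases hb.eq_or_lt with h | hb'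
  · have ha1 : a = 1 := by linarith
    simpa [← h, ha1] using hA
  exact (mySmulPD hA ha').add (mySmulPD hB hb')

lemma myConcaveOn : ConcaveOn ℝ {A : Matrix n n ℝ | A.PosDef} (fun A => Real.log A.det) :=
  ⟨myConvexPD, fun A hA B hB a b ha hb hab => by
    simpa [smul_eq_mul] using myLogDetPair hA hB ha hb hab⟩

lemma myHconcat {d k : ℕ} {m : Fin k → ℕ} (Xc : (j : Fin k) → Matrix (Fin d) (Fin (m j)) ℝ) :
    hconcat Xc * (hconcat Xc)ᵀ = ∑ j, Xc j * (Xc j)ᵀ := by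
  ext i i'
  rw [Matrix.sum_apply, Matrix.mul_apply]
  rw [show (Finset.univ : Finset ((j : Fin k) × Fin (m j))) = Finset.univ.sigma (fun _ => Finset.univ)
    from rfl, Finset.sum_sigma]
  exact Finset.sum_congr rfl fun j _ => by
    rw [Matrix.mul_apply]
    exact Finset.sum_congr rfl fun p _ => rfl

end Aux

theorem stmt13 (ε : ℝ) (hε : 0 < ε) (d k : ℕ) (hd : 1 ≤ d) (hk : 1 ≤ k)
    (m : Fin k → ℕ) (hm : ∀ j, 1 ≤ m j)
    (Xc : (j : Fin k) → Matrix (Fin d) (Fin (m j)) ℝ) :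
    ((∑ j, m j : ℕ) : ℝ) / 2 *
        Real.log
          (Matrix.det
            ((1 : Matrix (Fin d) (Fin d) ℝ) +
              ((d : ℝ) / (((∑ j, m j : ℕ) : ℝ) * ε ^ 2)) •
                (hconcat Xc * (hconcat Xc)ᵀ)))
    ≥ ∑ j,
        (m j : ℝ) / 2 *
          Real.log
            (Matrix.det
              ((1 : Matrix (Fin d) (Fin d) ℝ) +
                ((d : ℝ) / ((m j : ℝ) * ε ^ 2)) • (Xc j * (Xc j)ᵀ))) := by
  rw [ge_iff_le]
  have hε2 : (0:ℝ) < ε ^ 2 := by positivity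
  have hmtot_pos : 0 < ∑ j, m j :=
    Finset.sum_pos (fun j _ => hm j) ⟨⟨0, hk⟩, Finset.mem_univ _⟩
  have hmtotR : (0:ℝ) < ((∑ j, m j : ℕ) : ℝ) := by exact_mod_cast hmtot_pos
  have hmjR : ∀ j, (0:ℝ) < (m j : ℝ) := fun j => by exact_mod_cast hm j
  set mt : ℝ := ((∑ j, m j : ℕ) : ℝ) with hmt
  -- the individual matrices
  set A : Fin k → Matrix (Fin d) (Fin d) ℝ :=
    fun j => 1 + ((d : ℝ) / ((m j : ℝ) * ε ^ 2)) • (Xc j * (Xc j)ᵀ) with hA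
  have hGpsd : ∀ j, (Xc j * (Xc j)ᵀ).PosSemidef := fun j => by
    have h := Matrix.posSemidef_self_mul_conjTranspose (Xc j)
    rwa [conjTranspose_eq_transpose_of_trivial] at h
  have hApd : ∀ j, (A j).PosDef := fun j => by
    refine Matrix.PosDef.one.add_posSemidef (mySmulPSD (hGpsd j) ?_)
    positivity
  set w : Fin k → ℝ := fun j => (m j : ℝ) / mt with hw
  have hw0 : ∀ j ∈ Finset.univ, 0 ≤ w j := fun j _ => by
    have := (hmjR j).le
    positivity
  have hw1 : ∑ j, w j = 1 := by
    rw [hw, ← Finset.sum_div]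
    rw [show ∑ j, ((m j : ℕ) : ℝ) = mt by rw [hmt]; push_cast; rfl]
    field_simp
  have jensen := myConcaveOn.le_map_sum hw0 hw1 (fun j _ => hApd j)
  have hsum_eq : ∑ j, w j • A j
      = 1 + ((d : ℝ) / (mt * ε ^ 2)) • (hconcat Xc * (hconcat Xc)ᵀ) := by
    have hterm : ∀ j, w j • A j
        = w j • (1 : Matrix (Fin d) (Fin d) ℝ)
          + ((d : ℝ) / (mt * ε ^ 2)) • (Xc j * (Xc j)ᵀ) := by
      intro j
      rw [hA, smul_add, smul_smul]
      congr 2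
      rw [hw]
      field_simp [(hmjR j).ne', hmtotR.ne', hε.ne']
    rw [Finset.sum_congr rfl (fun j _ => hterm j), Finset.sum_add_distrib,
      ← Finset.sum_smul, hw1, one_smul, ← Finset.smul_sum, myHconcat]
  rw [hsum_eq] at jensen
  have step : ∀ j, (m j : ℝ) / 2 * Real.log (A j).det
      = mt / 2 * (w j • Real.log (A j).det) := by
    intro j
    rw [hw, smul_eq_mul]
    field_simp
  calc ∑ j, (m j : ℝ) / 2 * Real.log (A j).det
      = mt / 2 * ∑ j, w j • Real.log (A j).det := by
        rw [Finset.mul_sum]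
        exact Finset.sum_congr rfl fun j _ => step j
    _ ≤ mt / 2 * Real.log
          (Matrix.det (1 + ((d : ℝ) / (mt * ε ^ 2)) • (hconcat Xc * (hconcat Xc)ᵀ))) := by
        refine mul_le_mul_of_nonneg_left ?_ (by positivity)
        simpa using jensen
end
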